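/- Let r be a graphon with η ≤ r ≤ 1−η on [0,1]^2 for some η > 0 and let f be any graphon. For N ∈ ℕ let B_i = [(i−1)/N, i/N) for 1 ≤ i ≤ N−1 and B_N = [(N−1)/N, 1], and define the block graphons f_N and r_N by f_N(x,y) = N^2 ∫_{B_i×B_j} f for (x,y) ∈ B_i×B_j, and similarly for r_N. Then lim_{N→∞} I_{r_N}(f_N) = I_r(f). -/

import Mathlib

open MeasureTheory Real Filter Set Topology

noncomputable section

/-- The unit interval `[0,1]` as a subset of `ℝ`. -/
def UI : Set ℝ := Set.Icc 0 1

/-- A graphon: a symmetric measurable function `[0,1]² → [0,1]`. -/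
def IsGraphon (h : ℝ → ℝ → ℝ) : Prop :=
  Measurable (Function.uncurry h) ∧ (∀ x y, h x y = h y x) ∧
    ∀ x ∈ UI, ∀ y ∈ UI, h x y ∈ Set.Icc (0:ℝ) 1

/-- The operator norm of the integral operator `T_h` on `L²([0,1])` associated with a
symmetric bounded kernel `h`, expressed via its quadratic form. -/
def gOpNorm (h : ℝ → ℝ → ℝ) : ℝ :=
  sSup {t : ℝ | ∃ u : ℝ → ℝ, Measurable u ∧ IntegrableOn (fun x => u x ^ 2) UI ∧
    (∫ x in UI, u x ^ 2) ≤ 1 ∧ t = |∫ x in UI, ∫ y in UI, u x * h x y * u y|}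

/-- Relative entropy of Bernoulli(a) with respect to Bernoulli(b), with `0 log 0 = 0`. -/
def relEnt (a b : ℝ) : ℝ :=
  a * Real.log (a / b) + (1 - a) * Real.log ((1 - a) / (1 - b))

/-- The rate function `I_r(h) = ∫∫ R(h(x,y) | r(x,y)) dx dy`. -/
def Ient (r h : ℝ → ℝ → ℝ) : ℝ := ∫ x in UI, ∫ y in UI, relEnt (h x y) (r x y)

/-- The rate function `ψ_r(β) = inf { I_r(h) : h graphon, ‖T_h‖ = β }`. -/
def psiRate (r : ℝ → ℝ → ℝ) (β : ℝ) : ℝ :=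
  sInf {c : ℝ | ∃ h : ℝ → ℝ → ℝ, IsGraphon h ∧ gOpNorm h = β ∧ Ient r h = c}

/-- The `L²([0,1]²)` norm of a kernel. -/
def L2norm2 (f : ℝ → ℝ → ℝ) : ℝ := Real.sqrt (∫ x in UI, ∫ y in UI, f x y ^ 2)

end

noncomputable section

/-- The index i ∈ {0, …, N−1} of the block B_{i+1} = [i/N, (i+1)/N) containing x
(the last block also contains 1). -/
def blockIdx (N : ℕ) (x : ℝ) : ℕ := min (Nat.floor ((N : ℝ) * x)) (N - 1)

/-- The block average (step-function approximation) of a kernel f with N² blocks. -/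
def blockAvg (N : ℕ) (f : ℝ → ℝ → ℝ) : ℝ → ℝ → ℝ := fun x y =>
  (N : ℝ) ^ 2 *
    ∫ u in Set.Ico ((blockIdx N x : ℝ) / N) (((blockIdx N x : ℝ) + 1) / N),
      ∫ v in Set.Ico ((blockIdx N y : ℝ) / N) (((blockIdx N y : ℝ) + 1) / N), f u v

end

section BlockGraphonAux
open Metric

noncomputable section BGaux

/-- blockIdx + 1 ≤ N -/
lemma blockIdx_add_one_le (N : ℕ) (hN : 1 ≤ N) (x : ℝ) : blockIdx N x + 1 ≤ N := by
  have : blockIdx N x ≤ N - 1 := min_le_right _ _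
  omega

lemma block_Icc_subset_UI (N : ℕ) (hN : 1 ≤ N) (x : ℝ) :
    Set.Icc ((blockIdx N x : ℝ) / N) (((blockIdx N x : ℝ) + 1) / N) ⊆ UI := by
  have hN0 : (0:ℝ) < N := by exact_mod_cast hN
  have h1 : ((blockIdx N x : ℝ) + 1) ≤ N := by
    exact_mod_cast blockIdx_add_one_le N hN x
  apply Set.Icc_subset_Icc
  · positivity
  · rw [div_le_one hN0]; exact h1

lemma block_Ico_subset_UI (N : ℕ) (hN : 1 ≤ N) (x : ℝ) :
    Set.Ico ((blockIdx N x : ℝ) / N) (((blockIdx N x : ℝ) + 1) / N) ⊆ UI :=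
  Set.Ico_subset_Icc_self.trans (block_Icc_subset_UI N hN x)

/-- x belongs to its own block. -/
lemma mem_block (N : ℕ) (hN : 1 ≤ N) {x : ℝ} (hx : x ∈ Set.Ico (0:ℝ) 1) :
    x ∈ Set.Ico ((blockIdx N x : ℝ) / N) (((blockIdx N x : ℝ) + 1) / N) := by
  have hN0 : (0:ℝ) < N := by exact_mod_cast hN
  have hnn : (0:ℝ) ≤ (N:ℝ) * x := mul_nonneg hN0.le hx.1
  have hflt : Nat.floor ((N:ℝ) * x) < N := by
    rw [Nat.floor_lt hnn]
    calc (N:ℝ) * x < N * 1 := by nlinarith [hx.2]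
    _ = N := mul_one _
  have hidx : blockIdx N x = Nat.floor ((N:ℝ) * x) := by
    unfold blockIdx
    exact min_eq_left (by omega)
  rw [hidx]
  constructor
  · rw [div_le_iff₀ hN0, mul_comm]
    exact Nat.floor_le (by linarith)
  · rw [lt_div_iff₀ hN0, mul_comm]
    exact Nat.lt_floor_add_one _

lemma volume_UI2 : volume (UI ×ˢ UI) = 1 := by
  rw [MeasureTheory.Measure.volume_eq_prod, MeasureTheory.Measure.prod_prod]
  simp [UI]

lemma integrableOn_UI2 {g : ℝ → ℝ → ℝ} (hm : Measurable (Function.uncurry g))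
    (hb : ∀ x ∈ UI, ∀ y ∈ UI, g x y ∈ Set.Icc (0:ℝ) 1) :
    IntegrableOn (Function.uncurry g) (UI ×ˢ UI) volume := by
  apply Measure.integrableOn_of_bounded (M := 1)
  · rw [volume_UI2]; exact ENNReal.one_ne_top
  · exact hm.aestronglyMeasurable
  · have hUIm : MeasurableSet (UI ×ˢ UI) := (measurableSet_Icc).prod (measurableSet_Icc)
    rw [ae_restrict_iff' hUIm]
    refine ae_of_all _ ?_
    rintro ⟨x, y⟩ ⟨hx, hy⟩
    have := hb x hx y hy
    rw [Function.uncurry_apply_pair, Real.norm_eq_abs, abs_le]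
    exact ⟨by linarith [this.1], this.2⟩

end BGaux

noncomputable section BGaux2

lemma blockAvg_eq_setIntegral {g : ℝ → ℝ → ℝ}
    (hg : IntegrableOn (Function.uncurry g) (UI ×ˢ UI) volume)
    (N : ℕ) (hN : 1 ≤ N) (x y : ℝ) :
    blockAvg N g x y = (N : ℝ) ^ 2 *
      ∫ q in (Set.Ico ((blockIdx N x : ℝ) / N) (((blockIdx N x : ℝ) + 1) / N) ×ˢ
        Set.Ico ((blockIdx N y : ℝ) / N) (((blockIdx N y : ℝ) + 1) / N)),
        Function.uncurry g q := by
  have hint : IntegrableOn (Function.uncurry g)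
      (Set.Ico ((blockIdx N x : ℝ) / N) (((blockIdx N x : ℝ) + 1) / N) ×ˢ
        Set.Ico ((blockIdx N y : ℝ) / N) (((blockIdx N y : ℝ) + 1) / N)) volume :=
    hg.mono_set (Set.prod_mono (block_Ico_subset_UI N hN x) (block_Ico_subset_UI N hN y))
  unfold blockAvg
  congr 1
  rw [MeasureTheory.Measure.volume_eq_prod] at hint ⊢
  exact (MeasureTheory.setIntegral_prod _ hint).symm

lemma volume_block_prod (a b c d : ℝ) :
    volume ((Set.Ico a b ×ˢ Set.Ico c d : Set (ℝ × ℝ))) =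
      ENNReal.ofReal (b - a) * ENNReal.ofReal (d - c) := by
  rw [MeasureTheory.Measure.volume_eq_prod, MeasureTheory.Measure.prod_prod,
    Real.volume_Ico, Real.volume_Ico]

lemma blockAvg_mem {g : ℝ → ℝ → ℝ}
    (hg : IntegrableOn (Function.uncurry g) (UI ×ˢ UI) volume)
    {lo hi : ℝ} (hb : ∀ x ∈ UI, ∀ y ∈ UI, g x y ∈ Set.Icc lo hi)
    (N : ℕ) (hN : 1 ≤ N) (x y : ℝ) :
    blockAvg N g x y ∈ Set.Icc lo hi := by
  have hN0 : (0:ℝ) < N := by exact_mod_cast hN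
  set Q : Set (ℝ × ℝ) := Set.Ico ((blockIdx N x : ℝ) / N) (((blockIdx N x : ℝ) + 1) / N) ×ˢ
      Set.Ico ((blockIdx N y : ℝ) / N) (((blockIdx N y : ℝ) + 1) / N) with hQ
  have hQsub : Q ⊆ UI ×ˢ UI :=
    Set.prod_mono (block_Ico_subset_UI N hN x) (block_Ico_subset_UI N hN y)
  have hQm : MeasurableSet Q := measurableSet_Ico.prod measurableSet_Ico
  have hvol : volume Q = ENNReal.ofReal ((1:ℝ)/N * (1/N)) := by
    rw [hQ, volume_block_prod,
      show (((blockIdx N x:ℝ)+1)/N - (blockIdx N x:ℝ)/N) = 1/N by ring,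
      show (((blockIdx N y:ℝ)+1)/N - (blockIdx N y:ℝ)/N) = 1/N by ring,
      ← ENNReal.ofReal_mul (by positivity)]
  have hvolR : (volume Q).toReal = 1/N * (1/N) := by
    rw [hvol, ENNReal.toReal_ofReal (by positivity)]
  have hint : IntegrableOn (Function.uncurry g) Q volume := hg.mono_set hQsub
  have hcl : IntegrableOn (fun _ : ℝ × ℝ => lo) Q volume :=
    integrableOn_const (by rw [hvol]; exact ENNReal.ofReal_lt_top.ne)
  have hch : IntegrableOn (fun _ : ℝ × ℝ => hi) Q volume :=
    integrableOn_const (by rw [hvol]; exact ENNReal.ofReal_lt_top.ne)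
  have hmem : ∀ q ∈ Q, Function.uncurry g q ∈ Set.Icc lo hi := by
    intro q hq
    obtain ⟨h1, h2⟩ := hQsub hq
    exact hb q.1 h1 q.2 h2
  have hlow : lo * (1/N * (1/N)) ≤ ∫ q in Q, Function.uncurry g q := by
    calc lo * (1/N * (1/N)) = ∫ _ in Q, lo := by
          rw [setIntegral_const, measureReal_def, hvolR, smul_eq_mul, mul_comm]
    _ ≤ _ := setIntegral_mono_on hcl hint hQm (fun q hq => (hmem q hq).1)
  have hhigh : (∫ q in Q, Function.uncurry g q) ≤ hi * (1/N * (1/N)) := by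
    calc (∫ q in Q, Function.uncurry g q) ≤ ∫ _ in Q, hi :=
          setIntegral_mono_on hint hch hQm (fun q hq => (hmem q hq).2)
    _ = hi * (1/N * (1/N)) := by rw [setIntegral_const, measureReal_def, hvolR, smul_eq_mul, mul_comm]
  rw [blockAvg_eq_setIntegral hg N hN x y]
  have hNne : (N:ℝ) ≠ 0 := hN0.ne'
  constructor
  · have := mul_le_mul_of_nonneg_left hlow (by positivity : (0:ℝ) ≤ (N:ℝ)^2)
    calc lo = (N:ℝ)^2 * (lo * (1/N * (1/N))) := by field_simp
    _ ≤ _ := this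
  · have := mul_le_mul_of_nonneg_left hhigh (by positivity : (0:ℝ) ≤ (N:ℝ)^2)
    calc (N:ℝ)^2 * ∫ q in Q, Function.uncurry g q ≤ (N:ℝ)^2 * (hi * (1/N * (1/N))) := this
    _ = hi := by field_simp

end BGaux2

noncomputable section BGaux3

lemma prod_Icc_ae_eq (a b c d : ℝ) :
    ((Set.Icc a b ×ˢ Set.Icc c d : Set (ℝ × ℝ)) : Set (ℝ × ℝ)) =ᵐ[volume]
      (Set.Ico a b ×ˢ Set.Ico c d : Set (ℝ × ℝ)) := by
  rw [MeasureTheory.ae_eq_set]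
  constructor
  · refine measure_mono_null
      (t := ({b} ×ˢ (Set.univ : Set ℝ)) ∪ ((Set.univ : Set ℝ) ×ˢ ({d} : Set ℝ))) ?_ ?_
    · rintro ⟨u, v⟩ ⟨⟨⟨hu1, hu2⟩, ⟨hv1, hv2⟩⟩, hn⟩
      by_cases h1 : u < b
      · by_cases h2 : v < d
        · exact absurd ⟨⟨hu1, h1⟩, ⟨hv1, h2⟩⟩ hn
        · exact Or.inr ⟨Set.mem_univ _, le_antisymm hv2 (not_lt.1 h2)⟩
      · exact Or.inl ⟨le_antisymm hu2 (not_lt.1 h1), Set.mem_univ _⟩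
    · apply measure_union_null <;>
        rw [MeasureTheory.Measure.volume_eq_prod, MeasureTheory.Measure.prod_prod] <;> simp
  · have : ((Set.Ico a b ×ˢ Set.Ico c d : Set (ℝ × ℝ)) \ (Set.Icc a b ×ˢ Set.Icc c d)) = ∅ :=
      Set.diff_eq_empty.2 (Set.prod_mono Set.Ico_subset_Icc_self Set.Ico_subset_Icc_self)
    rw [this, measure_empty]

/-- The block containing (x,y) is, up to null sets, a closed ball in ℝ × ℝ. -/
lemma block_closedBall (N : ℕ) (hN : 1 ≤ N) (x y : ℝ) :
    Metric.closedBall ((((blockIdx N x : ℝ) + 2⁻¹) / N, ((blockIdx N y : ℝ) + 2⁻¹) / N) : ℝ × ℝ)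
      (1 / (2 * N)) =
    Set.Icc ((blockIdx N x : ℝ) / N) (((blockIdx N x : ℝ) + 1) / N) ×ˢ
      Set.Icc ((blockIdx N y : ℝ) / N) (((blockIdx N y : ℝ) + 1) / N) := by
  have hNne : (N:ℝ) ≠ 0 := by positivity
  rw [← closedBall_prod_same, Real.closedBall_eq_Icc, Real.closedBall_eq_Icc]
  congr 1 <;> [skip; skip] <;> congr 1 <;> field_simp <;> ring

/-- blockAvg as an average over a closed ball of the indicator extension. -/
lemma blockAvg_eq_average {g : ℝ → ℝ → ℝ}
    (hg : IntegrableOn (Function.uncurry g) (UI ×ˢ UI) volume)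
    (N : ℕ) (hN : 1 ≤ N) (x y : ℝ) :
    blockAvg N g x y =
      ⨍ q in Metric.closedBall
          ((((blockIdx N x : ℝ) + 2⁻¹) / N, ((blockIdx N y : ℝ) + 2⁻¹) / N) : ℝ × ℝ)
          (1 / (2 * N)),
        (UI ×ˢ UI).indicator (Function.uncurry g) q := by
  have hN0 : (0:ℝ) < N := by exact_mod_cast hN
  have hUIm : MeasurableSet (UI ×ˢ UI) := (measurableSet_Icc).prod (measurableSet_Icc)
  rw [block_closedBall N hN x y, setAverage_eq,
    setIntegral_indicator hUIm]
  have hsub : (Set.Icc ((blockIdx N x : ℝ) / N) (((blockIdx N x : ℝ) + 1) / N) ×ˢ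
      Set.Icc ((blockIdx N y : ℝ) / N) (((blockIdx N y : ℝ) + 1) / N)) ⊆ UI ×ˢ UI :=
    Set.prod_mono (block_Icc_subset_UI N hN x) (block_Icc_subset_UI N hN y)
  rw [Set.inter_eq_left.2 hsub]
  have hIccIco := prod_Icc_ae_eq ((blockIdx N x : ℝ) / N) (((blockIdx N x : ℝ) + 1) / N)
    ((blockIdx N y : ℝ) / N) (((blockIdx N y : ℝ) + 1) / N)
  rw [setIntegral_congr_set hIccIco]
  have hvolIcc : volume (Set.Icc ((blockIdx N x : ℝ) / N) (((blockIdx N x : ℝ) + 1) / N) ×ˢ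
      Set.Icc ((blockIdx N y : ℝ) / N) (((blockIdx N y : ℝ) + 1) / N)) =
      ENNReal.ofReal ((1:ℝ)/N * (1/N)) := by
    rw [MeasureTheory.Measure.volume_eq_prod, MeasureTheory.Measure.prod_prod,
      Real.volume_Icc, Real.volume_Icc,
      show (((blockIdx N x:ℝ)+1)/N - (blockIdx N x:ℝ)/N) = 1/N by ring,
      show (((blockIdx N y:ℝ)+1)/N - (blockIdx N y:ℝ)/N) = 1/N by ring,
      ← ENNReal.ofReal_mul (by positivity)]
  rw [measureReal_def, hvolIcc, blockAvg_eq_setIntegral hg N hN x y, smul_eq_mul]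
  congr 1
  rw [ENNReal.toReal_ofReal (by positivity)]
  rw [show (1:ℝ)/N * (1/N) = ((N:ℝ)^2)⁻¹ by field_simp]
  rw [inv_inv]

end BGaux3

noncomputable section BGaux4

lemma measurable_blockIdx (N : ℕ) : Measurable (blockIdx N) :=
  (Nat.measurable_floor.comp (measurable_const.mul measurable_id)).min measurable_const

lemma measurable_uncurry_blockAvg (N : ℕ) (g : ℝ → ℝ → ℝ) :
    Measurable (Function.uncurry (blockAvg N g)) := by
  have : Function.uncurry (blockAvg N g) =
      (fun q : ℕ × ℕ => (N : ℝ) ^ 2 *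
        ∫ u in Set.Ico ((q.1 : ℝ) / N) (((q.1 : ℝ) + 1) / N),
          ∫ v in Set.Ico ((q.2 : ℝ) / N) (((q.2 : ℝ) + 1) / N), g u v) ∘
      (fun p : ℝ × ℝ => (blockIdx N p.1, blockIdx N p.2)) := by
    funext p; rfl
  rw [this]
  exact (measurable_of_countable _).comp
    (((measurable_blockIdx N).comp measurable_fst).prodMk
      ((measurable_blockIdx N).comp measurable_snd))

/-- Key pointwise lemma: block averages converge a.e. on the open unit square. -/
lemma blockAvg_tendsto_ae {g : ℝ → ℝ → ℝ} (hm : Measurable (Function.uncurry g))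
    (hb : ∀ x ∈ UI, ∀ y ∈ UI, g x y ∈ Set.Icc (0:ℝ) 1) :
    ∀ᵐ p : ℝ × ℝ ∂volume, p ∈ Set.Ioo (0:ℝ) 1 ×ˢ Set.Ioo (0:ℝ) 1 →
      Filter.Tendsto (fun N : ℕ => blockAvg N g p.1 p.2) Filter.atTop (nhds (g p.1 p.2)) := by
  have hUIm : MeasurableSet (UI ×ˢ UI) := (measurableSet_Icc).prod (measurableSet_Icc)
  set G : ℝ × ℝ → ℝ := (UI ×ˢ UI).indicator (Function.uncurry g) with hG
  have hGint : Integrable G volume :=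
    (integrable_indicator_iff hUIm).2 (integrableOn_UI2 hm hb)
  filter_upwards [IsUnifLocDoublingMeasure.ae_tendsto_average (μ := (volume : Measure (ℝ × ℝ)))
    hGint.locallyIntegrable 1] with p hp hpS
  obtain ⟨hp1, hp2⟩ := hpS
  have hpUI : p ∈ UI ×ˢ UI := ⟨Set.Ioo_subset_Icc_self hp1, Set.Ioo_subset_Icc_self hp2⟩
  -- apply the Lebesgue differentiation statement with moving centers
  have hδ : Filter.Tendsto (fun N : ℕ => 1 / (2 * (N:ℝ))) Filter.atTop (nhdsWithin 0 (Set.Ioi 0)) := by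
    rw [tendsto_nhdsWithin_iff]
    constructor
    · have h2 : Filter.Tendsto (fun N : ℕ => 2 * (N:ℝ)) Filter.atTop Filter.atTop :=
        (tendsto_natCast_atTop_atTop).const_mul_atTop two_pos
      have := h2.inv_tendsto_atTop
      refine this.congr fun N => ?_
      simp [one_div, Pi.inv_apply]
    · filter_upwards [Filter.eventually_ge_atTop 1] with N hN
      have : (0:ℝ) < N := by exact_mod_cast hN
      exact Set.mem_Ioi.2 (by positivity)
  have hmem : ∀ᶠ N : ℕ in Filter.atTop,
      p ∈ Metric.closedBall
        ((((blockIdx N p.1 : ℝ) + 2⁻¹) / N, ((blockIdx N p.2 : ℝ) + 2⁻¹) / N) : ℝ × ℝ)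
        (1 * (1 / (2 * N))) := by
    filter_upwards [Filter.eventually_ge_atTop 1] with N hN
    rw [one_mul, block_closedBall N hN p.1 p.2]
    have h1 := mem_block N hN (x := p.1) ⟨hp1.1.le, hp1.2⟩
    have h2 := mem_block N hN (x := p.2) ⟨hp2.1.le, hp2.2⟩
    exact ⟨Set.Ico_subset_Icc_self h1, Set.Ico_subset_Icc_self h2⟩
  have hlim := hp (fun N : ℕ =>
      ((((blockIdx N p.1 : ℝ) + 2⁻¹) / N, ((blockIdx N p.2 : ℝ) + 2⁻¹) / N) : ℝ × ℝ))
    (fun N : ℕ => 1 / (2 * (N:ℝ))) hδ hmem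
  have hGp : G p = g p.1 p.2 := by
    rw [hG, Set.indicator_of_mem hpUI, Function.uncurry_apply_pair]
  rw [hGp] at hlim
  apply hlim.congr'
  filter_upwards [Filter.eventually_ge_atTop 1] with N hN
  exact (blockAvg_eq_average (integrableOn_UI2 hm hb) N hN p.1 p.2).symm

end BGaux4

noncomputable section BGaux5

lemma relEnt_eq {a b : ℝ} (hb0 : b ≠ 0) (hb1 : (1:ℝ) - b ≠ 0) :
    relEnt a b = a * Real.log a - a * Real.log b
      + ((1 - a) * Real.log (1 - a) - (1 - a) * Real.log (1 - b)) := by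
  unfold relEnt
  have h1 : a * Real.log (a / b) = a * Real.log a - a * Real.log b := by
    rcases eq_or_ne a 0 with ha | ha
    · simp [ha]
    · rw [Real.log_div ha hb0]; ring
  have h2 : (1 - a) * Real.log ((1 - a) / (1 - b)) =
      (1 - a) * Real.log (1 - a) - (1 - a) * Real.log (1 - b) := by
    rcases eq_or_ne (1 - a) 0 with ha | ha
    · simp [ha]
    · rw [Real.log_div ha hb1]; ring
  rw [h1, h2]

lemma continuousAt_relEnt {a b : ℝ} (hb : b ∈ Set.Ioo (0:ℝ) 1) :
    ContinuousAt (fun q : ℝ × ℝ => relEnt q.1 q.2) (a, b) := by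
  have hφ : ContinuousAt (fun q : ℝ × ℝ => q.1 * Real.log q.1 - q.1 * Real.log q.2
      + ((1 - q.1) * Real.log (1 - q.1) - (1 - q.1) * Real.log (1 - q.2))) (a, b) := by
    have hfst : ContinuousAt (fun q : ℝ × ℝ => q.1) (a, b) := continuous_fst.continuousAt
    have hsnd : ContinuousAt (fun q : ℝ × ℝ => q.2) (a, b) := continuous_snd.continuousAt
    have hml : ContinuousAt (fun q : ℝ × ℝ => q.1 * Real.log q.1) (a, b) :=
      (Real.continuous_mul_log).continuousAt.comp hfst
    have hml2 : ContinuousAt (fun q : ℝ × ℝ => (1 - q.1) * Real.log (1 - q.1)) (a, b) :=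
      (Real.continuous_mul_log).continuousAt.comp (continuousAt_const.sub hfst)
    have hlb : ContinuousAt (fun q : ℝ × ℝ => Real.log q.2) (a, b) :=
      hsnd.log hb.1.ne'
    have hlb2 : ContinuousAt (fun q : ℝ × ℝ => Real.log (1 - q.2)) (a, b) := by
      have hc : ContinuousAt (fun q : ℝ × ℝ => 1 - q.2) (a, b) := continuousAt_const.sub hsnd
      have hne : (1:ℝ) - b ≠ 0 := ne_of_gt (by linarith [hb.2])
      exact hc.log hne
    exact (hml.sub (hfst.mul hlb)).add
      ((hml2.sub ((continuousAt_const.sub hfst).mul hlb2)))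
  apply hφ.congr
  have hopen : IsOpen {q : ℝ × ℝ | q.2 ∈ Set.Ioo (0:ℝ) 1} := isOpen_Ioo.preimage continuous_snd
  filter_upwards [hopen.mem_nhds (by exact hb)] with q hq
  exact (relEnt_eq hq.1.ne' (by linarith [hq.2] : (1:ℝ) - q.2 ≠ 0)).symm

lemma abs_mul_log_le {a : ℝ} (ha : a ∈ Set.Icc (0:ℝ) 1) : |a * Real.log a| ≤ 1 := by
  rcases eq_or_lt_of_le ha.1 with h0 | h0
  · simp [← h0]
  · rw [abs_le]
    have hla : Real.log a ≤ 0 := Real.log_nonpos h0.le ha.2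
    constructor
    · have h1 : Real.log a⁻¹ ≤ a⁻¹ - 1 := Real.log_le_sub_one_of_pos (by positivity)
      rw [Real.log_inv] at h1
      have h2 : a * (-Real.log a) ≤ a * (a⁻¹ - 1) := mul_le_mul_of_nonneg_left h1 h0.le
      have h3 : a * (a⁻¹ - 1) = 1 - a := by field_simp
      nlinarith [ha.1]
    · nlinarith

lemma abs_relEnt_le {η a b : ℝ} (hη : 0 < η) (ha : a ∈ Set.Icc (0:ℝ) 1)
    (hb : b ∈ Set.Icc η (1 - η)) : |relEnt a b| ≤ 2 + 2 * |Real.log η| := by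
  have hb0 : 0 < b := lt_of_lt_of_le hη hb.1
  have hb1 : b < 1 := lt_of_le_of_lt hb.2 (by linarith)
  have h1b : η ≤ 1 - b := by linarith [hb.2]
  have hη1 : η ≤ 1 := by linarith [hb.1, hb1.le]
  have hlogb : |Real.log b| ≤ |Real.log η| := by
    rw [abs_of_nonpos (Real.log_nonpos hb0.le hb1.le),
      abs_of_nonpos (Real.log_nonpos hη.le hη1)]
    have := Real.log_le_log hη hb.1
    linarith
  have hlog1b : |Real.log (1 - b)| ≤ |Real.log η| := by
    rw [abs_of_nonpos (Real.log_nonpos (by linarith) (by linarith)),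
      abs_of_nonpos (Real.log_nonpos hη.le hη1)]
    have := Real.log_le_log hη h1b
    linarith
  rw [relEnt_eq hb0.ne' (by linarith : (1:ℝ) - b ≠ 0)]
  have h1 : |a * Real.log a| ≤ 1 := abs_mul_log_le ha
  have h2 : |(1 - a) * Real.log (1 - a)| ≤ 1 :=
    abs_mul_log_le ⟨by linarith [ha.2], by linarith [ha.1]⟩
  have h3 : |a * Real.log b| ≤ |Real.log η| := by
    rw [abs_mul]
    calc |a| * |Real.log b| ≤ 1 * |Real.log η| := by
          apply mul_le_mul _ hlogb (abs_nonneg _) zero_le_one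
          rw [abs_of_nonneg ha.1]; exact ha.2
    _ = |Real.log η| := one_mul _
  have h4 : |(1 - a) * Real.log (1 - b)| ≤ |Real.log η| := by
    rw [abs_mul]
    calc |1 - a| * |Real.log (1 - b)| ≤ 1 * |Real.log η| := by
          apply mul_le_mul _ hlog1b (abs_nonneg _) zero_le_one
          rw [abs_of_nonneg (by linarith [ha.2])]; linarith [ha.1]
    _ = |Real.log η| := one_mul _
  calc |a * Real.log a - a * Real.log b +
        ((1 - a) * Real.log (1 - a) - (1 - a) * Real.log (1 - b))|
      ≤ |a * Real.log a - a * Real.log b| +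
        |(1 - a) * Real.log (1 - a) - (1 - a) * Real.log (1 - b)| := abs_add_le _ _
    _ ≤ (|a * Real.log a| + |a * Real.log b|) +
        (|(1 - a) * Real.log (1 - a)| + |(1 - a) * Real.log (1 - b)|) :=
        add_le_add (abs_sub _ _) (abs_sub _ _)
    _ ≤ 2 + 2 * |Real.log η| := by linarith

lemma measurable_relEnt_comp {F R : ℝ × ℝ → ℝ} (hF : Measurable F) (hR : Measurable R) :
    Measurable (fun p => relEnt (F p) (R p)) := by
  unfold relEnt
  exact (hF.mul (Real.measurable_log.comp (hF.div hR))).add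
    ((measurable_const.sub hF).mul
      (Real.measurable_log.comp ((measurable_const.sub hF).div (measurable_const.sub hR))))

end BGaux5

noncomputable section BGaux6

lemma Ient_eq_setIntegral {R F : ℝ → ℝ → ℝ}
    (hint : IntegrableOn (fun p : ℝ × ℝ => relEnt (F p.1 p.2) (R p.1 p.2)) (UI ×ˢ UI) volume) :
    Ient R F = ∫ p in UI ×ˢ UI, relEnt (F p.1 p.2) (R p.1 p.2) := by
  unfold Ient
  rw [MeasureTheory.Measure.volume_eq_prod] at hint ⊢
  exact (MeasureTheory.setIntegral_prod _ hint).symm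

end BGaux6

theorem blockGraphon_cost_convergence'
    (r : ℝ → ℝ → ℝ) (η : ℝ) (hη : 0 < η)
    (hrmeas : Measurable (Function.uncurry r))
    (hrsymm : ∀ x y, r x y = r y x)
    (hrbound : ∀ x ∈ UI, ∀ y ∈ UI, r x y ∈ Set.Icc η (1 - η))
    (f : ℝ → ℝ → ℝ)
    (hfm : Measurable (Function.uncurry f))
    (hfb : ∀ x ∈ UI, ∀ y ∈ UI, f x y ∈ Set.Icc (0:ℝ) 1) :
    Filter.Tendsto (fun N : ℕ => Ient (blockAvg N r) (blockAvg N f))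
      Filter.atTop (nhds (Ient r f)) := by
  have hUIm : MeasurableSet (UI ×ˢ UI) := (measurableSet_Icc).prod (measurableSet_Icc)
  have h0UI : (0:ℝ) ∈ UI := ⟨le_refl 0, zero_le_one⟩
  have hη1 : η ≤ 1 - η :=
    le_trans (hrbound 0 h0UI 0 h0UI).1 (hrbound 0 h0UI 0 h0UI).2
  have hrb01 : ∀ x ∈ UI, ∀ y ∈ UI, r x y ∈ Set.Icc (0:ℝ) 1 := fun x hx y hy =>
    ⟨le_trans hη.le (hrbound x hx y hy).1, le_trans (hrbound x hx y hy).2 (by linarith)⟩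
  have hrint : IntegrableOn (Function.uncurry r) (UI ×ˢ UI) volume :=
    integrableOn_UI2 hrmeas hrb01
  have hfint : IntegrableOn (Function.uncurry f) (UI ×ˢ UI) volume :=
    integrableOn_UI2 hfm hfb
  set M : ℝ := 2 + 2 * |Real.log η| with hM
  have hM0 : (0:ℝ) ≤ M := by positivity
  -- pointwise uniform bound
  have hbd : ∀ N : ℕ, ∀ p ∈ UI ×ˢ UI,
      |relEnt (blockAvg N f p.1 p.2) (blockAvg N r p.1 p.2)| ≤ M := by
    intro N p hp
    rcases Nat.eq_zero_or_pos N with h0 | h1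
    · subst h0
      simp only [blockAvg, Nat.cast_zero, ne_eq, OfNat.ofNat_ne_zero, not_false_eq_true,
        zero_pow, zero_mul]
      simpa [relEnt] using hM0
    · exact abs_relEnt_le hη (blockAvg_mem hfint hfb N h1 p.1 p.2)
        (blockAvg_mem hrint hrbound N h1 p.1 p.2)
  have hbdlim : ∀ p ∈ UI ×ˢ UI, |relEnt (f p.1 p.2) (r p.1 p.2)| ≤ M := fun p hp =>
    abs_relEnt_le hη (hfb p.1 hp.1 p.2 hp.2) (hrbound p.1 hp.1 p.2 hp.2)
  -- integrability of all integrands on UI × UI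
  have hintN : ∀ N : ℕ, IntegrableOn
      (fun p : ℝ × ℝ => relEnt (blockAvg N f p.1 p.2) (blockAvg N r p.1 p.2))
      (UI ×ˢ UI) volume := by
    intro N
    apply Measure.integrableOn_of_bounded (M := M)
    · rw [volume_UI2]; exact ENNReal.one_ne_top
    · exact (measurable_relEnt_comp (measurable_uncurry_blockAvg N f)
        (measurable_uncurry_blockAvg N r)).aestronglyMeasurable
    · rw [ae_restrict_iff' hUIm]
      exact ae_of_all _ fun p hp => by
        rw [Real.norm_eq_abs]; exact hbd N p hp
  have hintlim : IntegrableOn (fun p : ℝ × ℝ => relEnt (f p.1 p.2) (r p.1 p.2))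
      (UI ×ˢ UI) volume := by
    apply Measure.integrableOn_of_bounded (M := M)
    · rw [volume_UI2]; exact ENNReal.one_ne_top
    · exact (measurable_relEnt_comp hfm hrmeas).aestronglyMeasurable
    · rw [ae_restrict_iff' hUIm]
      exact ae_of_all _ fun p hp => by
        rw [Real.norm_eq_abs]; exact hbdlim p hp
  -- almost-every point of UI² is in the open square
  have hS0 : volume.restrict (UI ×ˢ UI) ((Set.Ioo (0:ℝ) 1 ×ˢ Set.Ioo (0:ℝ) 1)ᶜ) = 0 := by
    rw [Measure.restrict_apply (((measurableSet_Ioo).prod (measurableSet_Ioo)).compl)]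
    refine measure_mono_null
      (t := ((({0, 1} : Set ℝ) ×ˢ (Set.univ : Set ℝ)) ∪
        ((Set.univ : Set ℝ) ×ˢ ({0, 1} : Set ℝ)))) ?_ ?_
    · rintro ⟨u, v⟩ ⟨hn, ⟨hu1, hu2⟩, ⟨hv1, hv2⟩⟩
      by_cases h1 : 0 < u ∧ u < 1
      · by_cases h2 : 0 < v ∧ v < 1
        · exact absurd (Set.mem_prod.2 ⟨Set.mem_Ioo.2 h1, Set.mem_Ioo.2 h2⟩) hn
        · right
          refine ⟨Set.mem_univ _, ?_⟩
          rcases not_and_or.1 h2 with h | h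
          · exact Or.inl (le_antisymm (not_lt.1 h) hv1)
          · exact Or.inr (le_antisymm hv2 (not_lt.1 h))
      · left
        refine ⟨?_, Set.mem_univ _⟩
        rcases not_and_or.1 h1 with h | h
        · exact Or.inl (le_antisymm (not_lt.1 h) hu1)
        · exact Or.inr (le_antisymm hu2 (not_lt.1 h))
    · have h01 : volume ({0, 1} : Set ℝ) = 0 :=
        Set.Finite.measure_zero ((Set.finite_singleton (1:ℝ)).insert 0) volume
      apply measure_union_null <;>
        rw [MeasureTheory.Measure.volume_eq_prod, MeasureTheory.Measure.prod_prod] <;>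
        simp [h01]
  have hSae : ∀ᵐ p ∂(volume.restrict (UI ×ˢ UI)),
      p ∈ Set.Ioo (0:ℝ) 1 ×ˢ Set.Ioo (0:ℝ) 1 := by
    rw [ae_iff]
    convert hS0 using 2
    rfl
  -- a.e. convergence of the integrands
  have hfl := (blockAvg_tendsto_ae hfm hfb).filter_mono
    (ae_mono (Measure.restrict_le_self (μ := volume) (s := UI ×ˢ UI)))
  have hrl := (blockAvg_tendsto_ae hrmeas hrb01).filter_mono
    (ae_mono (Measure.restrict_le_self (μ := volume) (s := UI ×ˢ UI)))
  have hlim : ∀ᵐ p ∂(volume.restrict (UI ×ˢ UI)),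
      Filter.Tendsto (fun N : ℕ => relEnt (blockAvg N f p.1 p.2) (blockAvg N r p.1 p.2))
        Filter.atTop (nhds (relEnt (f p.1 p.2) (r p.1 p.2))) := by
    filter_upwards [hSae, hfl, hrl, ae_restrict_mem hUIm] with p hS h1 h2 hUI2
    have hrIoo : r p.1 p.2 ∈ Set.Ioo (0:ℝ) 1 := by
      obtain ⟨ha, hb⟩ := hrbound p.1 hUI2.1 p.2 hUI2.2
      exact ⟨lt_of_lt_of_le hη ha, lt_of_le_of_lt hb (by linarith)⟩
    exact (continuousAt_relEnt hrIoo).tendsto.comp ((h1 hS).prodMk_nhds (h2 hS))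
  -- dominated convergence
  have hDCT := MeasureTheory.tendsto_integral_of_dominated_convergence
    (μ := volume.restrict (UI ×ˢ UI))
    (F := fun (N : ℕ) (p : ℝ × ℝ) => relEnt (blockAvg N f p.1 p.2) (blockAvg N r p.1 p.2))
    (f := fun p : ℝ × ℝ => relEnt (f p.1 p.2) (r p.1 p.2))
    (bound := fun _ => M)
    (fun N => (measurable_relEnt_comp (measurable_uncurry_blockAvg N f)
      (measurable_uncurry_blockAvg N r)).aestronglyMeasurable)
    (integrableOn_const (by rw [volume_UI2]; exact ENNReal.one_lt_top.ne))
    (fun N => by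
      rw [ae_restrict_iff' hUIm]
      exact ae_of_all _ fun p hp => by rw [Real.norm_eq_abs]; exact hbd N p hp)
    hlim
  have hrw : ∀ N : ℕ, Ient (blockAvg N r) (blockAvg N f) =
      ∫ p in UI ×ˢ UI, relEnt (blockAvg N f p.1 p.2) (blockAvg N r p.1 p.2) :=
    fun N => Ient_eq_setIntegral (hintN N)
  have hrwlim : Ient r f = ∫ p in UI ×ˢ UI, relEnt (f p.1 p.2) (r p.1 p.2) :=
    Ient_eq_setIntegral hintlim
  rw [hrwlim]
  exact hDCT.congr fun N => (hrw N).symm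

end BlockGraphonAux

/-- convergence of the cost function along block graphon approximations:
I_{r_N}(f_N) → I_r(f). -/
theorem blockGraphon_cost_convergence
    (r : ℝ → ℝ → ℝ) (η : ℝ) (hη : 0 < η)
    (hrmeas : Measurable (Function.uncurry r))
    (hrsymm : ∀ x y, r x y = r y x)
    (hrbound : ∀ x ∈ UI, ∀ y ∈ UI, r x y ∈ Set.Icc η (1 - η))
    (f : ℝ → ℝ → ℝ) (hf : IsGraphon f) :
    Filter.Tendsto (fun N : ℕ => Ient (blockAvg N r) (blockAvg N f))
      Filter.atTop (nhds (Ient r f)) := by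
  exact blockGraphon_cost_convergence' r η hη hrmeas hrsymm hrbound f hf.1 hf.2.2
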